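/- arXiv:2405.13755 — 2 statements merged into one kernel-verified Lean document; each statement's English description precedes it below -/
import Mathlib

section
/- Suppose ‖φ(x,a)‖₂ ≤ R for all (x,a) ∈ 𝒳×𝒜. For any θ, θ' ∈ ℝ^d and every state x, the softmax policies satisfy ∑_a |π_θ(a|x) − π_{θ'}(a|x)| ≤ R‖θ − θ'‖₂. -/
noncomputable section
open MeasureTheory Finset Matrix
open scoped BigOperators ENNReal

namespace Paper

variable {X A : Type*}

/-- Euclidean dot product on `Fin d → ℝ`. -/
def dotp {d : ℕ} (u v : Fin d → ℝ) : ℝ := ∑ i, u i * v i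

/-- Euclidean norm on `Fin d → ℝ`. -/
def nrm2 {d : ℕ} (u : Fin d → ℝ) : ℝ := Real.sqrt (∑ i, (u i) ^ 2)

/-- Squared weighted norm `uᵀ M u`. -/
def wnormSq {d : ℕ} (M : Matrix (Fin d) (Fin d) ℝ) (u : Fin d → ℝ) : ℝ := dotp u (M.mulVec u)

/-- Kullback–Leibler divergence between finitely supported distributions. -/
def KLdiv [Fintype A] (p q : A → ℝ) : ℝ := ∑ a, p a * Real.log (p a / q a)

/-- A stochastic policy. -/
def IsPolicy [Fintype A] (π : X → A → ℝ) : Prop :=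
  (∀ x a, 0 ≤ π x a) ∧ (∀ x, ∑ a, π x a = 1)

/-- A probability distribution over a finite set. -/
def IsDist [Fintype X] (ν : X → ℝ) : Prop := (∀ x, 0 ≤ ν x) ∧ ∑ x, ν x = 1

/-- A transition kernel. -/
def IsKernel [Fintype X] (p : X → A → X → ℝ) : Prop :=
  (∀ x a x', 0 ≤ p x a x') ∧ (∀ x a, ∑ x', p x a x' = 1)

/-- The softmax policy associated with parameter vector `θ`. -/
def softmax [Fintype A] {d : ℕ} (φ : X → A → Fin d → ℝ) (θ : Fin d → ℝ) (x : X) (a : A) : ℝ :=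
  Real.exp (dotp (φ x a) θ) / ∑ a', Real.exp (dotp (φ x a') θ)

/-- State-action distribution at step `k` of the process started from `ν₀` and following `π`. -/
def trajDist [Fintype X] [Fintype A] (p : X → A → X → ℝ) (ν₀ : X → ℝ) (π : X → A → ℝ) :
    ℕ → X → A → ℝ
  | 0 => fun x a => ν₀ x * π x a
  | k + 1 => fun x a => (∑ x', ∑ a', trajDist p ν₀ π k x' a' * p x' a' x) * π x a

/-- Normalized discounted state-action occupancy measure of policy `π`. -/
def occupancy [Fintype X] [Fintype A] (γ : ℝ) (p : X → A → X → ℝ) (ν₀ : X → ℝ)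
    (π : X → A → ℝ) (x : X) (a : A) : ℝ :=
  (1 - γ) * ∑' k : ℕ, γ ^ k * trajDist p ν₀ π k x a

/-- `k`-step state transition kernel of the Markov chain induced by policy `π`. -/
def kernelPow [Fintype X] [Fintype A] [DecidableEq X] (p : X → A → X → ℝ) (π : X → A → ℝ) :
    ℕ → X → X → ℝ
  | 0 => fun x y => if x = y then 1 else 0
  | k + 1 => fun x y => ∑ z, kernelPow p π k x z * ∑ a, π z a * p z a y

/-- The value function of policy `π`. -/
def vval [Fintype X] [Fintype A] [DecidableEq X] (γ : ℝ) (r : X → A → ℝ) (p : X → A → X → ℝ)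
    (π : X → A → ℝ) (x : X) : ℝ :=
  ∑' k : ℕ, γ ^ k * ∑ y, kernelPow p π k x y * ∑ a, π y a * r y a

/-- The action-value function of policy `π`. -/
def qval [Fintype X] [Fintype A] [DecidableEq X] (γ : ℝ) (r : X → A → ℝ) (p : X → A → X → ℝ)
    (π : X → A → ℝ) (x : X) (a : A) : ℝ :=
  r x a + γ * ∑ x', p x a x' * vval γ r p π x'

/-- The normalized discounted return of policy `π`. -/
def ret [Fintype X] [Fintype A] (γ : ℝ) (p : X → A → X → ℝ) (ν₀ : X → ℝ) (r : X → A → ℝ)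
    (π : X → A → ℝ) : ℝ := ∑ x, ∑ a, occupancy γ p ν₀ π x a * r x a

/-- The parametrized value-function candidate `v_{θ,π}`. -/
def vparam [Fintype A] {d : ℕ} (φ : X → A → Fin d → ℝ) (θ : Fin d → ℝ) (π : X → A → ℝ)
    (x : X) : ℝ := ∑ a, π x a * dotp θ (φ x a)

/-- `Ψ v`, where `Ψ` is the matrix with columns `ψ x`. -/
def psiApply [Fintype X] {d : ℕ} (ψ : X → Fin d → ℝ) (v : X → ℝ) : Fin d → ℝ :=
  ∑ x, v x • ψ x

/-- `Φᵀ μ`, the feature occupancy of a state-action measure `μ`. -/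
def featOcc [Fintype X] [Fintype A] {d : ℕ} (φ : X → A → Fin d → ℝ) (μ : X → A → ℝ) :
    Fin d → ℝ := ∑ x, ∑ a, μ x a • φ x a

/-- The parametrized occupancy candidate `μ_{λ,π}` built from columns `ψh`. -/
def muOf [Fintype X] {d : ℕ} (γ : ℝ) (ν₀ : X → ℝ) (ψh : X → Fin d → ℝ) (lam : Fin d → ℝ)
    (π : X → A → ℝ) (x : X) (a : A) : ℝ :=
  π x a * ((1 - γ) * ν₀ x + γ * dotp (ψh x) lam)

/-- The reduced Lagrangian `f(λ, π; θ)`. -/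
def lag [Fintype X] [Fintype A] {d : ℕ} (γ : ℝ) (ν₀ : X → ℝ) (omg : Fin d → ℝ)
    (ψ : X → Fin d → ℝ) (φ : X → A → Fin d → ℝ) (lam θv : Fin d → ℝ) (π : X → A → ℝ) : ℝ :=
  (1 - γ) * ∑ x, ν₀ x * vparam φ θv π x
    + dotp lam (omg + γ • psiApply ψ (vparam φ θv π) - θv)

/-- The regularized empirical covariance matrix `Λ̂`. -/
def covMat {d n : ℕ} (β : ℝ) (φi : Fin n → Fin d → ℝ) : Matrix (Fin d) (Fin d) ℝ :=
  β • (1 : Matrix (Fin d) (Fin d) ℝ) + (n : ℝ)⁻¹ • ∑ i, vecMulVec (φi i) (φi i)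

/-- `Ψ̂ v`, where `Ψ̂` is the least-squares estimator of `Ψ`. -/
def psiHatApply {X : Type*} {d n : ℕ} (β : ℝ) (φi : Fin n → Fin d → ℝ)
    (xs : Fin n → X) (v : X → ℝ) : Fin d → ℝ :=
  (covMat β φi)⁻¹.mulVec ((n : ℝ)⁻¹ • ∑ i, v (xs i) • φi i)

/-- `ψ̂ x`, the column of the least-squares estimator `Ψ̂` at state `x`. -/
def psiHatCol {X : Type*} [DecidableEq X] {d n : ℕ} (β : ℝ) (φi : Fin n → Fin d → ℝ)
    (xs : Fin n → X) (x : X) : Fin d → ℝ :=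
  (covMat β φi)⁻¹.mulVec ((n : ℝ)⁻¹ • ∑ i, (if xs i = x then (1 : ℝ) else 0) • φi i)


lemma nrm2_nonneg {d : ℕ} (u : Fin d → ℝ) : 0 ≤ nrm2 u := Real.sqrt_nonneg _

lemma abs_dotp_le {d : ℕ} (u v : Fin d → ℝ) : |dotp u v| ≤ nrm2 u * nrm2 v := by
  rw [abs_le]
  constructor
  · have h := Real.sum_mul_le_sqrt_mul_sqrt Finset.univ (fun i => -(u i)) v
    have e1 : ∑ i, -(u i) * v i = -dotp u v := by simp [dotp]
    have e2 : (∑ i, (-(u i)) ^ 2) = ∑ i, (u i) ^ 2 := by simp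
    simp only [e1, e2] at h
    simp only [nrm2]
    linarith [h]
  · exact Real.sum_mul_le_sqrt_mul_sqrt Finset.univ u v

/-- Mean absolute deviation bound: if `|c a| ≤ B` then `∑ p a |c a - c̄| ≤ B`. -/
lemma mad_le {A : Type*} [Fintype A] (p c : A → ℝ) (hp : ∀ a, 0 ≤ p a)
    (hs : ∑ a, p a = 1) {B : ℝ} (hB : 0 ≤ B) (hc : ∀ a, |c a| ≤ B) :
    ∑ a, p a * |c a - ∑ b, p b * c b| ≤ B := by
  set μ := ∑ b, p b * c b with hμdef
  have hμ : |μ| ≤ B := by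
    calc |μ| ≤ ∑ b, |p b * c b| := Finset.abs_sum_le_sum_abs _ _
    _ ≤ ∑ b, p b * B := by
        apply Finset.sum_le_sum; intro b _
        rw [abs_mul, abs_of_nonneg (hp b)]
        exact mul_le_mul_of_nonneg_left (hc b) (hp b)
    _ = B := by rw [← Finset.sum_mul, hs, one_mul]
  set Tp := ∑ a, p a * max (c a - μ) 0 with hTp
  set Tm := ∑ a, p a * max (μ - c a) 0 with hTm
  have hTpm : Tp = Tm := by
    have : Tp - Tm = 0 := by
      rw [hTp, hTm, ← Finset.sum_sub_distrib]
      have : ∀ a, p a * max (c a - μ) 0 - p a * max (μ - c a) 0 = p a * (c a - μ) := by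
        intro a
        rcases le_total (c a) μ with h | h
        · rw [max_eq_right (by linarith), max_eq_left (by linarith)]; ring
        · rw [max_eq_left (by linarith), max_eq_right (by linarith)]; ring
      rw [Finset.sum_congr rfl fun a _ => this a]
      have : ∑ a, p a * (c a - μ) = μ - μ * ∑ a, p a := by
        simp [mul_sub, Finset.sum_sub_distrib, hμdef, ← Finset.sum_mul, mul_comm]
      rw [this, hs]; ring
    linarith
  have hsum : ∑ a, p a * |c a - μ| = Tp + Tm := by
    rw [hTp, hTm, ← Finset.sum_add_distrib]
    apply Finset.sum_congr rfl; intro a _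
    rcases le_total (c a) μ with h | h
    · rw [abs_of_nonpos (by linarith), max_eq_right (by linarith), max_eq_left (by linarith)]; ring
    · rw [abs_of_nonneg (by linarith), max_eq_left (by linarith), max_eq_right (by linarith)]; ring
  set P := ∑ a, if μ < c a then p a else 0 with hPdef
  have hP0 : 0 ≤ P := Finset.sum_nonneg fun a _ => by split <;> [exact hp a; exact le_rfl]
  have hP1 : P ≤ 1 := by
    rw [hPdef, ← hs]
    apply Finset.sum_le_sum; intro a _; split <;> [exact le_rfl; exact hp a]
  have h1 : Tp ≤ P * (B - μ) := by
    rw [hTp, hPdef, Finset.sum_mul]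
    apply Finset.sum_le_sum; intro a _
    rcases lt_or_ge μ (c a) with h | h
    · rw [if_pos h]
      have : max (c a - μ) 0 = c a - μ := max_eq_left (by linarith)
      rw [this]
      have := (abs_le.1 (hc a)).2
      exact mul_le_mul_of_nonneg_left (by linarith) (hp a)
    · rw [if_neg (not_lt.2 h)]
      have : max (c a - μ) 0 = 0 := max_eq_right (by linarith)
      rw [this]; simp
  have h2 : Tm ≤ (1 - P) * (B + μ) := by
    have hrw : 1 - P = ∑ a, if μ < c a then 0 else p a := by
      rw [hPdef, ← hs, ← Finset.sum_sub_distrib]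
      apply Finset.sum_congr rfl; intro a _; split <;> ring
    rw [hTm, hrw, Finset.sum_mul]
    apply Finset.sum_le_sum; intro a _
    rcases lt_or_ge μ (c a) with h | h
    · rw [if_pos h]
      have : max (μ - c a) 0 = 0 := max_eq_right (by linarith)
      rw [this]; simp
    · rw [if_neg (not_lt.2 h)]
      have : max (μ - c a) 0 = μ - c a := max_eq_left (by linarith)
      rw [this]
      have := (abs_le.1 (hc a)).1
      exact mul_le_mul_of_nonneg_left (by linarith) (hp a)
  have hTp0 : 0 ≤ Tp := Finset.sum_nonneg fun a _ =>
    mul_nonneg (hp a) (le_max_right _ _)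
  rw [hsum, ← hTpm]
  -- 2 Tp ≤ B, from Tp ≤ P(B-μ), Tp ≤ (1-P)(B+μ), |μ| ≤ B
  have hBμ1 : 0 ≤ B - μ := by have := (abs_le.1 hμ).2; linarith
  have hBμ2 : 0 ≤ B + μ := by have := (abs_le.1 hμ).1; linarith
  have h2' : Tp ≤ (1 - P) * (B + μ) := hTpm ▸ h2
  have hsq : (2 * Tp) ^ 2 ≤ B ^ 2 := by
    nlinarith [mul_le_mul h1 h2' hTp0 (mul_nonneg hP0 hBμ1),
      mul_nonneg (mul_nonneg hP0 (by linarith : (0:ℝ) ≤ 1 - P)) (sq_nonneg μ),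
      mul_nonneg (sq_nonneg (2 * P - 1)) (sq_nonneg B)]
  nlinarith [hsq, hTp0, hB]

/-- total-variation smoothness of softmax policies:
`∑ₐ |π_θ(a|x) − π_θ'(a|x)| ≤ R‖θ − θ'‖₂`. -/
theorem statement15 {X A : Type*} [Fintype X] [Fintype A] [Nonempty A] {d : ℕ} (R : ℝ)
    (φ : X → A → Fin d → ℝ) (hφ : ∀ x a, nrm2 (φ x a) ≤ R)
    (θ θ' : Fin d → ℝ) (x : X) :
    ∑ a, |softmax φ θ x a - softmax φ θ' x a| ≤ R * nrm2 (θ - θ') := by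
  classical
  set u : Fin d → ℝ := θ - θ' with hu
  set c : A → ℝ := fun a => dotp (φ x a) u with hc
  set e : A → ℝ → ℝ := fun a t => Real.exp (dotp (φ x a) θ' + t * c a) with he
  set Z : ℝ → ℝ := fun t => ∑ b, e b t with hZ
  have hZpos : ∀ t, 0 < Z t :=
    fun t => Finset.sum_pos (fun b _ => Real.exp_pos _) Finset.univ_nonempty
  set F : ℝ → A → ℝ := fun t a => e a t / Z t with hF
  set D : ℝ → A → ℝ := fun t a => F t a * (c a - ∑ b, F t b * c b) with hD
  -- relation to softmax
  have hdot : ∀ (a : A) (t : ℝ), dotp (φ x a) (θ' + t • u) = dotp (φ x a) θ' + t * c a := by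
    intro a t
    simp only [dotp, hc, Pi.add_apply, Pi.smul_apply, smul_eq_mul, mul_add,
      Finset.sum_add_distrib, Finset.mul_sum]
    congr 1
    apply Finset.sum_congr rfl; intro i _; ring
  have hFs : ∀ t, F t = softmax φ (θ' + t • u) x := by
    intro t; funext a
    simp only [softmax, hF, he, hZ]
    rw [hdot]
    congr 1
    apply Finset.sum_congr rfl; intro b _; rw [hdot]
  -- probabilities
  have hFnn : ∀ t a, 0 ≤ F t a := fun t a => div_nonneg (Real.exp_pos _).le (hZpos t).le
  have hFsum : ∀ t, ∑ a, F t a = 1 := by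
    intro t
    simp only [hF]
    rw [← Finset.sum_div]
    exact div_self (ne_of_gt (hZpos t))
  -- derivative
  have hea : ∀ (a : A) (t : ℝ), HasDerivAt (fun s => e a s) (c a * e a t) t := by
    intro a t
    have h1 : HasDerivAt (fun s : ℝ => dotp (φ x a) θ' + s * c a) (c a) t :=
      (hasDerivAt_mul_const (c a)).const_add _
    simpa [he, mul_comm] using h1.exp
  have hder : ∀ (t : ℝ) (a : A), HasDerivAt (fun s => F s a) (D t a) t := by
    intro t a
    have hZd : HasDerivAt Z (∑ b, c b * e b t) t := HasDerivAt.fun_sum fun b _ => hea b t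
    have h := (hea a t).div hZd (ne_of_gt (hZpos t))
    have hsum : ∑ b, F t b * c b = (∑ b, c b * e b t) / Z t := by
      rw [Finset.sum_div]
      apply Finset.sum_congr rfl; intro b _
      simp only [hF]
      ring
    have heq : D t a = (c a * e a t * Z t - e a t * ∑ b, c b * e b t) / Z t ^ 2 := by
      have hZne : Z t ≠ 0 := ne_of_gt (hZpos t)
      simp only [hD]
      rw [hsum]
      simp only [hF]
      field_simp
    rw [heq]
    exact h
  -- package into ℓ¹ space
  let L : (A → ℝ) →L[ℝ] PiLp 1 (fun _ : A => ℝ) :=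
    ((PiLp.continuousLinearEquiv 1 ℝ (fun _ : A => ℝ)).symm : (A → ℝ) →L[ℝ] _)
  have hLapp : ∀ (y : A → ℝ) (a : A), L y a = y a := fun y a => rfl
  have hnorm : ∀ y : A → ℝ, ‖L y‖ = ∑ a, |y a| := by
    intro y
    rw [PiLp.norm_eq_sum (by norm_num : (0:ℝ) < (1 : ℝ≥0∞).toReal)]
    simp [hLapp, Real.norm_eq_abs]
  have hG : ∀ t : ℝ, HasDerivAt (fun s => L (F s)) (L (D t)) t := by
    intro t
    have hFd : HasDerivAt F (D t) t := hasDerivAt_pi.2 fun a => hder t a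
    exact L.hasFDerivAt.comp_hasDerivAt t hFd
  -- bound on the derivative
  have hR : 0 ≤ R := le_trans (nrm2_nonneg _) (hφ x (Classical.arbitrary A))
  have hBnn : 0 ≤ R * nrm2 u := mul_nonneg hR (nrm2_nonneg u)
  have hcb : ∀ a, |c a| ≤ R * nrm2 u := fun a =>
    le_trans (abs_dotp_le _ _) (mul_le_mul_of_nonneg_right (hφ x a) (nrm2_nonneg u))
  have hC : ∀ t : ℝ, ‖L (D t)‖ ≤ R * nrm2 u := by
    intro t
    rw [hnorm]
    have : ∀ a, |D t a| = F t a * |c a - ∑ b, F t b * c b| := by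
      intro a
      rw [hD, abs_mul, abs_of_nonneg (hFnn t a)]
    rw [Finset.sum_congr rfl fun a _ => this a]
    exact mad_le (F t) c (hFnn t) (hFsum t) hBnn hcb
  -- mean value inequality on [0,1]
  have key : ‖L (F 1) - L (F 0)‖ ≤ (R * nrm2 u) * ‖(1 : ℝ) - 0‖ :=
    Convex.norm_image_sub_le_of_norm_hasDerivWithin_le
      (fun t _ => (hG t).hasDerivWithinAt) (fun t _ => hC t) (convex_Icc 0 1)
      (Set.left_mem_Icc.2 zero_le_one) (Set.right_mem_Icc.2 zero_le_one)
  have hF1 : F 1 = softmax φ θ x := by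
    rw [hFs 1]
    congr 1
    funext i
    simp [hu]
  have hF0 : F 0 = softmax φ θ' x := by
    rw [hFs 0]
    congr 1
    funext i
    simp
  have hfin : ‖L (F 1) - L (F 0)‖ = ∑ a, |softmax φ θ x a - softmax φ θ' x a| := by
    rw [← map_sub, hnorm]
    apply Finset.sum_congr rfl; intro a _
    rw [Pi.sub_apply, hF1, hF0]
  rw [hfin] at key
  simpa using key

end Paper
end
end

section
/- Suppose ‖φ(x,a)‖₂ ≤ R for all (x,a) ∈ 𝒳×𝒜. For any θ, θ' ∈ ℝ^d and every state x, the Kullback–Leibler divergence between the corresponding softmax policies satisfies D_KL(π_θ(·|x) ‖ π_{θ'}(·|x)) ≤ R²‖θ − θ'‖₂²/2. -/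
noncomputable section
open MeasureTheory Finset Matrix
open scoped BigOperators ENNReal

namespace Paper

variable {X A : Type*}

set_option maxHeartbeats 1000000 in
/-- Hoeffding-type bound. -/
theorem aux_hoeffding {A : Type*} [Fintype A] [Nonempty A] (p u : A → ℝ) (M : ℝ)
    (hp : ∀ a, 0 ≤ p a) (hp1 : ∑ a, p a = 1) (hu : ∀ a, |u a| ≤ M) :
    (∑ a, p a * u a) + Real.log (∑ a, p a * Real.exp (-u a)) ≤ M ^ 2 / 2 := by
  classical
  set μ : ℝ := ∑ a, p a * u a with hμ
  set S : ℝ → ℝ := fun t => ∑ a, p a * Real.exp (-t * u a) with hSdef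
  set S1 : ℝ → ℝ := fun t => ∑ a, p a * (-(u a)) * Real.exp (-t * u a) with hS1def
  set S2 : ℝ → ℝ := fun t => ∑ a, p a * (u a) ^ 2 * Real.exp (-t * u a) with hS2def
  have hM0 : 0 ≤ M := le_trans (abs_nonneg _) (hu (Classical.arbitrary _))
  -- positivity of S
  have hex : ∃ a, 0 < p a := by
    by_contra h
    push_neg at h
    have : ∑ a, p a = 0 := Finset.sum_eq_zero fun a _ => le_antisymm (h a) (hp a)
    simp [this] at hp1
  have hSpos : ∀ t, 0 < S t := by
    intro t
    obtain ⟨a, ha⟩ := hex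
    refine Finset.sum_pos' (fun b _ => mul_nonneg (hp b) (Real.exp_pos _).le) ⟨a, mem_univ a, ?_⟩
    exact mul_pos ha (Real.exp_pos _)
  -- derivatives
  have hS : ∀ t, HasDerivAt S (S1 t) t := by
    intro t
    have : ∀ a ∈ (univ : Finset A), HasDerivAt (fun t => p a * Real.exp (-t * u a))
        (p a * (-(u a)) * Real.exp (-t * u a)) t := by
      intro a _
      have h1 : HasDerivAt (fun t : ℝ => -t * u a) (-(u a)) t := by
        simpa using ((hasDerivAt_id t).neg.mul_const (u a))
      have := (h1.exp).const_mul (p a)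
      exact this.congr_deriv (by ring)
    exact HasDerivAt.fun_sum this
  have hS1 : ∀ t, HasDerivAt S1 (S2 t) t := by
    intro t
    have : ∀ a ∈ (univ : Finset A), HasDerivAt (fun t => p a * (-(u a)) * Real.exp (-t * u a))
        (p a * (u a) ^ 2 * Real.exp (-t * u a)) t := by
      intro a _
      have h1 : HasDerivAt (fun t : ℝ => -t * u a) (-(u a)) t := by
        simpa using ((hasDerivAt_id t).neg.mul_const (u a))
      have := (h1.exp).const_mul (p a * (-(u a)))
      exact this.congr_deriv (by ring)
    exact HasDerivAt.fun_sum this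
  -- F = derivative of f
  set F : ℝ → ℝ := fun t => μ + S1 t / S t with hFdef
  set f : ℝ → ℝ := fun t => t * μ + Real.log (S t) with hfdef
  have hf : ∀ t, HasDerivAt f (F t) t := by
    intro t
    have h1 : HasDerivAt (fun t : ℝ => t * μ) μ t := by simpa using (hasDerivAt_id t).mul_const μ
    exact h1.add ((hS t).log (hSpos t).ne')
  set G : ℝ → ℝ := fun t => (S2 t * S t - S1 t * S1 t) / (S t) ^ 2 with hGdef
  have hF : ∀ t, HasDerivAt F (G t) t := by
    intro t
    have h := (hasDerivAt_const t μ).add ((hS1 t).div (hS t) (hSpos t).ne')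
    rw [hGdef]
    rw [zero_add] at h
    exact h
  -- bound on G
  have hGle : ∀ t, G t ≤ M ^ 2 := by
    intro t
    have h2 : S2 t ≤ M ^ 2 * S t := by
      rw [hS2def, hSdef, Finset.mul_sum]
      refine Finset.sum_le_sum fun a _ => ?_
      have : (u a) ^ 2 ≤ M ^ 2 := sq_le_sq' (neg_le_of_abs_le (hu a)) (le_of_abs_le (hu a))
      nlinarith [hp a, (Real.exp_pos (-t * u a)).le, mul_nonneg (hp a) (Real.exp_pos (-t * u a)).le]
    have hS2' : (S t)^2 > 0 := pow_pos (hSpos t) 2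
    rw [hGdef, div_le_iff₀ hS2']
    nlinarith [sq_nonneg (S1 t), hSpos t]
  -- initial values
  have hS0 : S 0 = 1 := by simp [hSdef, hp1]
  have hS10 : S1 0 = -μ := by
    rw [hS1def, hμ, ← Finset.sum_neg_distrib]
    refine Finset.sum_congr rfl fun a _ => by rw [neg_zero, zero_mul, Real.exp_zero]; ring
  have hF0 : F 0 = 0 := by rw [hFdef]; simp only [hS0, hS10]; ring
  have hf0 : f 0 = 0 := by simp [hfdef, hS0]
  -- F t ≤ M^2 t on t > 0 via MVT
  have hFcont : Continuous F := by
    rw [continuous_iff_continuousAt]; exact fun t => (hF t).continuousAt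
  have hFle : ∀ t : ℝ, 0 < t → F t ≤ M ^ 2 * t := by
    intro t ht
    obtain ⟨c, hc, hceq⟩ := exists_hasDerivAt_eq_slope F G ht
      (hFcont.continuousOn) (fun x _ => hF x)
    have : (F t - F 0) / (t - 0) ≤ M ^ 2 := hceq ▸ hGle c
    rw [hF0] at this
    rw [div_le_iff₀ (by linarith)] at this
    linarith
  -- monotonicity of g on [0,1]
  set g : ℝ → ℝ := fun t => M ^ 2 * t ^ 2 / 2 - f t with hgdef
  have hg : ∀ t, HasDerivAt g (M ^ 2 * t - F t) t := by
    intro t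
    have h1 : HasDerivAt (fun t : ℝ => M ^ 2 * t ^ 2 / 2) (M ^ 2 * t) t := by
      have := ((hasDerivAt_pow 2 t).const_mul (M ^ 2)).div_const 2
      exact this.congr_deriv (by ring)
    exact h1.sub (hf t)
  have hmono : MonotoneOn g (Set.Icc (0:ℝ) 1) := by
    refine monotoneOn_of_deriv_nonneg (convex_Icc 0 1) ?_ ?_ ?_
    · exact Continuous.continuousOn (by
        rw [continuous_iff_continuousAt]; exact fun t => (hg t).continuousAt)
    · intro t ht
      exact (hg t).differentiableAt.differentiableWithinAt
    · intro t ht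
      rw [interior_Icc] at ht
      rw [(hg t).deriv]
      have := hFle t ht.1
      linarith
  have h01 : g 0 ≤ g 1 := hmono (by norm_num) (by norm_num) (by norm_num)
  have hg0 : g 0 = 0 := by simp [hgdef, hf0]
  have : f 1 ≤ M ^ 2 / 2 := by
    rw [hg0] at h01
    simp only [hgdef] at h01
    linarith [h01]
  have hf1 : f 1 = μ + Real.log (∑ a, p a * Real.exp (-u a)) := by
    simp [hfdef, hSdef]
  linarith [hf1 ▸ this]


lemma aux_abs_dotp_le {d : ℕ} (v w : Fin d → ℝ) : |dotp v w| ≤ nrm2 v * nrm2 w := by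
  rw [abs_le]
  simp only [dotp, nrm2]
  constructor
  · have h := Real.sum_mul_le_sqrt_mul_sqrt (univ : Finset (Fin d)) (fun i => -v i) w
    simp only [neg_mul, neg_sq] at h
    rw [Finset.sum_neg_distrib] at h
    linarith
  · exact Real.sum_mul_le_sqrt_mul_sqrt _ v w


set_option maxHeartbeats 1000000 in
/-- KL smoothness of softmax policies:
`D_KL(π_θ(·|x) ‖ π_θ'(·|x)) ≤ R²‖θ − θ'‖₂²/2`. -/
theorem statement16 {X A : Type*} [Fintype X] [Fintype A] [Nonempty A] {d : ℕ} (R : ℝ)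
    (φ : X → A → Fin d → ℝ) (hφ : ∀ x a, nrm2 (φ x a) ≤ R)
    (θ θ' : Fin d → ℝ) (x : X) :
    KLdiv (softmax φ θ x) (softmax φ θ' x) ≤ R ^ 2 * nrm2 (θ - θ') ^ 2 / 2 := by
  classical
  set u : A → ℝ := fun a => dotp (φ x a) (θ - θ') with hu_def
  set Z : ℝ := ∑ a', Real.exp (dotp (φ x a') θ) with hZ
  set Z' : ℝ := ∑ a', Real.exp (dotp (φ x a') θ') with hZ'
  have hZpos : 0 < Z := Finset.sum_pos (fun a _ => Real.exp_pos _) univ_nonempty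
  have hZ'pos : 0 < Z' := Finset.sum_pos (fun a _ => Real.exp_pos _) univ_nonempty
  set p : A → ℝ := softmax φ θ x with hp_def
  have hp_pos : ∀ a, 0 < p a := fun a => div_pos (Real.exp_pos _) hZpos
  have hp1 : ∑ a, p a = 1 := by
    rw [hp_def]
    simp only [softmax, ← hZ, ← Finset.sum_div]
    exact div_self hZpos.ne'
  have hu_eq : ∀ a, u a = dotp (φ x a) θ - dotp (φ x a) θ' := by
    intro a
    simp only [hu_def, dotp, Pi.sub_apply, mul_sub, Finset.sum_sub_distrib]
  -- rewrite KL
  have hlog : ∀ a, Real.log (p a / softmax φ θ' x a)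
      = u a + (Real.log Z' - Real.log Z) := by
    intro a
    rw [hp_def]
    simp only [softmax, ← hZ, ← hZ']
    rw [Real.log_div (by positivity) (by positivity),
      Real.log_div (Real.exp_pos _).ne' hZpos.ne',
      Real.log_div (Real.exp_pos _).ne' hZ'pos.ne',
      Real.log_exp, Real.log_exp, hu_eq a]
    ring
  have hKL : KLdiv p (softmax φ θ' x)
      = (∑ a, p a * u a) + (Real.log Z' - Real.log Z) := by
    rw [KLdiv]
    have : ∀ a ∈ (univ : Finset A), p a * Real.log (p a / softmax φ θ' x a)
        = p a * u a + p a * (Real.log Z' - Real.log Z) := by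
      intro a _
      rw [hlog a]; ring
    rw [Finset.sum_congr rfl this, Finset.sum_add_distrib, ← Finset.sum_mul, hp1, one_mul]
  have hZratio : Real.log Z' - Real.log Z = Real.log (∑ a, p a * Real.exp (-u a)) := by
    have h1 : ∑ a, p a * Real.exp (-u a) = Z' / Z := by
      have h2 : ∀ a ∈ (univ : Finset A), p a * Real.exp (-u a)
          = Real.exp (dotp (φ x a) θ') / Z := by
        intro a _
        rw [hp_def]
        simp only [softmax, ← hZ]
        rw [hu_eq a, div_mul_eq_mul_div, ← Real.exp_add]
        congr 2
        ring
      rw [Finset.sum_congr rfl h2, ← Finset.sum_div, ← hZ']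
    rw [h1, Real.log_div hZ'pos.ne' hZpos.ne']
  have hcs : ∀ a, |u a| ≤ R * nrm2 (θ - θ') := by
    intro a
    exact le_trans (aux_abs_dotp_le _ _)
      (mul_le_mul_of_nonneg_right (hφ x a) (Real.sqrt_nonneg _))
  have hkey := aux_hoeffding p u (R * nrm2 (θ - θ')) (fun a => (hp_pos a).le) hp1 hcs
  rw [hKL, hZratio]
  calc (∑ a, p a * u a) + Real.log (∑ a, p a * Real.exp (-u a))
      ≤ (R * nrm2 (θ - θ')) ^ 2 / 2 := hkey
    _ = R ^ 2 * nrm2 (θ - θ') ^ 2 / 2 := by ring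


end Paper
end
end
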